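/- The determinants D_n(s) and F_n(s) satisfy the recurrences D_n(s) = s·D_{n−1}(s) + (n−1)·F_{n−1}(s) and F_n(s) = −D_{n−1}(s) + (n−1)·F_{n−1}(s) for n ≥ 2. -/

import Mathlib

open Matrix Finset

section aux
variable {R : Type*} [CommRing R]

/-- elementary matrix: identity plus c in column 0 below diagonal -/
def Pmat (c : R) (k : ℕ) : Matrix (Fin (k+1)) (Fin (k+1)) R :=
  Matrix.of fun i j => if i = j then 1 else if j = 0 then c else 0

lemma det_Pmat (c : R) (k : ℕ) : (Pmat c k).det = 1 := by
  rw [Matrix.det_of_lowerTriangular]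
  · simp [Pmat]
  · intro i j hij
    simp only [Pmat, Matrix.of_apply]
    have h1 : i ≠ j := by
      intro h; subst h; exact absurd hij (lt_irrefl _)
    have h2 : j ≠ 0 := by
      intro h; subst h; exact absurd hij (by simp [OrderDual.toDual_lt_toDual]; exact Fin.zero_le i)
    simp [h1, h2]

lemma Pmat_mul (c : R) (k : ℕ) (A : Matrix (Fin (k+1)) (Fin (k+1)) R) :
    Pmat c k * A = Matrix.of fun i j => if i = 0 then A 0 j else A i j + c * A 0 j := by
  ext i j
  rw [Matrix.mul_apply]
  have key : ∀ x : Fin (k+1), Pmat c k i x * A x j =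
      (if x = i then A i j else 0) + (if x = 0 then (if i = 0 then 0 else c) * A 0 j else 0) := by
    intro x
    rcases eq_or_ne x i with h | h
    · subst h
      rcases eq_or_ne x 0 with h0 | h0 <;> simp [Pmat, h0]
    · rcases eq_or_ne x 0 with h0 | h0
      · subst h0
        simp [Pmat, h, Ne.symm h, (Ne.symm h : ¬ i = 0)]
      · simp [Pmat, h, Ne.symm h, h0]
  rw [Finset.sum_congr rfl fun x _ => key x, Finset.sum_add_distrib,
    Finset.sum_ite_eq' _ i, Finset.sum_ite_eq' _ 0]
  rcases eq_or_ne i 0 with h | h <;> simp [h]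

lemma mul_Pmat (k : ℕ) (A : Matrix (Fin (k+1)) (Fin (k+1)) R) :
    A * Pmat (1:R) k = Matrix.of fun i j => if j = 0 then (∑ x, A i x) else A i j := by
  ext i j
  rw [Matrix.mul_apply]
  rcases eq_or_ne j 0 with h | h
  · subst h
    simp only [Matrix.of_apply, if_pos rfl]
    refine Finset.sum_congr rfl fun x _ => ?_
    rcases eq_or_ne x 0 with h0 | h0 <;> simp [Pmat, h0]
  · have key : ∀ x : Fin (k+1), A i x * Pmat (1:R) k x j = if x = j then A i j else 0 := by
      intro x
      rcases eq_or_ne x j with h0 | h0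
      · subst h0; simp [Pmat]
      · simp [Pmat, h0, h]
    rw [Finset.sum_congr rfl fun x _ => key x, Finset.sum_ite_eq' _ j]
    simp [h]

lemma prodIte (a b : R) (k : ℕ) :
    (∏ i : Fin (k+1), if i = 0 then a else b) = a * b ^ k := by
  rw [Fin.prod_univ_succ]
  simp [Fin.succ_ne_zero]

lemma detD (s : R) (k : ℕ) :
    (Matrix.of fun i j : Fin (k+1) => if i = j then s else -1).det
      = (s - k) * (s + 1) ^ k := by
  set A : Matrix (Fin (k+1)) (Fin (k+1)) R :=
    Matrix.of fun i j => if i = j then s else -1 with hA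
  have rowsum : ∀ i : Fin (k+1), ∑ x, A i x = s - k := by
    intro i
    have key : ∀ x : Fin (k+1), A i x = (if x = i then s + 1 else 0) + (-1) := by
      intro x
      rcases eq_or_ne x i with h | h
      · subst h; simp [hA]
      · simp [hA, h, Ne.symm h]
    rw [Finset.sum_congr rfl fun x _ => key x, Finset.sum_add_distrib,
      Finset.sum_ite_eq' _ i]
    simp; ring
  have h1 : A * Pmat (1:R) k =
      Matrix.of fun i j => if j = 0 then s - k else A i j := by
    rw [mul_Pmat]; ext i j
    rcases eq_or_ne j 0 with h | h <;> simp [h, rowsum]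
  have h2 : Pmat (-1 : R) k * (A * Pmat (1:R) k) =
      Matrix.of fun i j => if i = 0 then (if j = 0 then s - k else -1)
        else (if i = j then s + 1 else 0) := by
    rw [h1, Pmat_mul]
    ext i j
    rcases eq_or_ne i 0 with hi | hi
    · subst hi
      rcases eq_or_ne j 0 with hj | hj
      · simp [hA, hj]
      · simp [hA, hj, Ne.symm hj]
    · rcases eq_or_ne j 0 with hj | hj
      · subst hj
        simp only [Matrix.of_apply, if_pos rfl, if_neg hi]
        simp
      · have hAz : A 0 j = -1 := by simp [hA, Ne.symm hj]
        simp only [Matrix.of_apply, if_neg hj, if_neg hi, hAz]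
        rcases eq_or_ne i j with hij | hij
        · subst hij
          have hv : ¬ ((i : Fin (k+1)) = 0) := hi
          simp [hA, hv]
        · simp [hA, hij]
  have hdet : A.det = (Pmat (-1 : R) k * (A * Pmat (1:R) k)).det := by
    rw [Matrix.det_mul, Matrix.det_mul, det_Pmat, det_Pmat, one_mul, mul_one]
  rw [hdet, h2, Matrix.det_of_upperTriangular]
  · have key : ∀ i : Fin (k+1),
        (Matrix.of fun i j : Fin (k+1) => if i = 0 then (if j = 0 then s - k else -1)
          else (if i = j then s + 1 else 0)) i i
        = if i = 0 then s - k else s + 1 := by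
      intro i; rcases eq_or_ne i 0 with h | h <;> simp [h]
    rw [Finset.prod_congr rfl fun i _ => key i, prodIte]
  · intro i j hij
    have h1 : i ≠ j := fun h => absurd hij (h ▸ lt_irrefl _)
    have h2 : i ≠ 0 := by
      intro h; subst h; exact Fin.not_lt_zero j hij
    simp [h1, h2, Ne.symm h1]

lemma detF (s : R) (k : ℕ) :
    (Matrix.of fun i j : Fin (k+1) =>
        if i = j then (if (i : ℕ) = 0 then -1 else s) else -1).det
      = -(s + 1) ^ k := by
  set A : Matrix (Fin (k+1)) (Fin (k+1)) R :=
    Matrix.of fun i j => if i = j then (if (i : ℕ) = 0 then -1 else s) else -1 with hA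
  have hrow0 : ∀ j : Fin (k+1), A 0 j = -1 := by
    intro j
    rcases eq_or_ne (0 : Fin (k+1)) j with h | h
    · subst h; simp [hA]
    · simp [hA, h]
  have h2 : Pmat (-1 : R) k * A =
      Matrix.of fun i j => if i = 0 then -1
        else (if i = j then s + 1 else 0) := by
    rw [Pmat_mul]
    ext i j
    rcases eq_or_ne i 0 with hi | hi
    · subst hi
      simp [hrow0]
    · have hv : (i : ℕ) ≠ 0 := fun h => hi (Fin.ext h)
      simp only [Matrix.of_apply, if_neg hi, hrow0]
      rcases eq_or_ne i j with hij | hij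
      · subst hij
        simp [hA, hv, hi]
      · simp [hA, hij]
  have hdet : A.det = (Pmat (-1 : R) k * A).det := by
    rw [Matrix.det_mul, det_Pmat, one_mul]
  rw [hdet, h2, Matrix.det_of_upperTriangular]
  · have key : ∀ i : Fin (k+1),
        (Matrix.of fun i j : Fin (k+1) => if i = 0 then -1
          else (if i = j then s + 1 else 0)) i i
        = if i = 0 then -1 else s + 1 := by
      intro i; rcases eq_or_ne i 0 with h | h <;> simp [h]
    rw [Finset.prod_congr rfl fun i _ => key i, prodIte]
    ring
  · intro i j hij
    have h1 : i ≠ j := fun h => absurd hij (h ▸ lt_irrefl _)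
    have h2 : i ≠ 0 := by
      intro h; subst h; exact Fin.not_lt_zero j hij
    simp [h1, h2]

end aux

theorem DF_recurrences {R : Type*} [CommRing R] (s : R)
    (D F : ℕ → R)
    (hD : ∀ k, D k = (Matrix.of fun i j : Fin k => if i = j then s else -1).det)
    (hF : ∀ k, F k = (Matrix.of fun i j : Fin k =>
        if i = j then (if (i : ℕ) = 0 then -1 else s) else -1).det)
    (n : ℕ) (hn : 2 ≤ n) :
    D n = s * D (n - 1) + ((n : R) - 1) * F (n - 1) ∧
      F n = -D (n - 1) + ((n : R) - 1) * F (n - 1) := by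
  obtain ⟨m, rfl⟩ := Nat.exists_eq_add_of_le hn
  have e1 : 2 + m - 1 = m + 1 := by omega
  have e2 : 2 + m = (m + 1) + 1 := by omega
  rw [e1, hD, hD, hF, hF, e2, detD, detD, detF, detF]
  push_cast
  constructor <;> ring
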